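/- The event that the union X of finite open clusters of bond percolation on Z^d contains an infinite connected component has probability 0 or 1, and its probability is non-increasing in p; hence there exists p_fin ∈ [0,1] such that this event has probability 1 for p < p_fin and probability 0 for p > p_fin. -/

import Mathlib

open Set Relation Filter

/-- Vertices of the lattice `ℤ^d`. -/
abbrev V (d : ℕ) := Fin d → ℤ

/-- Nearest-neighbour adjacency in `ℤ^d`: `x` and `y` differ by `1` in exactly
one coordinate. -/
def latAdj {d : ℕ} (x y : V d) : Prop :=
  ∃ i, (x i - y i).natAbs = 1 ∧ ∀ j, j ≠ i → x j = y j

/-- Connectivity in the complement of `S` (paths avoiding `S`). -/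
def connAvoid {d : ℕ} (S : Set (V d)) (a b : V d) : Prop :=
  ReflTransGen (fun u v => latAdj u v ∧ u ∉ S ∧ v ∉ S) a b

/-- The connected component of `w` in the complement of `S`. -/
def compOff {d : ℕ} (S : Set (V d)) (w : V d) : Set (V d) :=
  {z | connAvoid S w z}

/-- `y` lies outside `S` and is joined to infinity off `S` (its component in
the complement of `S` is infinite). -/
def toInfOff {d : ℕ} (S : Set (V d)) (y : V d) : Prop :=
  y ∉ S ∧ (compOff S y).Infinite

/-- `S ⊆ ℤ^d` is connected (as an induced subgraph of the lattice). -/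
def IsLatConnected {d : ℕ} (S : Set (V d)) : Prop :=
  ∀ a ∈ S, ∀ b ∈ S, ReflTransGen (fun u v => latAdj u v ∧ u ∈ S ∧ v ∈ S) a b

/-- `S` together with all its holes (the finite components of its complement). -/
def fillHoles {d : ℕ} (S : Set (V d)) : Set (V d) :=
  S ∪ {w | w ∉ S ∧ (compOff S w).Finite}

/-- We identify a plaquette with its dual edge, realized as an unordered pair of
adjacent lattice points.  `PiS S` is the set of plaquettes dual to edges
`⟨x,y⟩` with `x ∈ S` and `y ∉ S` joined to infinity off `S`. -/
def PiS {d : ℕ} (S : Set (V d)) : Set (Sym2 (V d)) :=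
  {e | ∃ x y, latAdj x y ∧ x ∈ S ∧ toInfOff S y ∧ e = s(x, y)}

/-- The `i`-th unit coordinate vector. -/
def uv {d : ℕ} (i : Fin d) : V d := fun k => if k = i then 1 else 0

/-- A unit square (2-facet) of `ℤ^d`; its dual is a `(d-2)`-facet of the dual
lattice `ℤ^d + (1/2,…,1/2)`. -/
structure Square (d : ℕ) where
  corner : V d
  i : Fin d
  j : Fin d
  hij : i ≠ j

/-- The four edges of a unit square.  A plaquette (identified with its dual
edge `e`) is incident to the `(d-2)`-facet dual to the square `F` exactly when
`e` is one of the four edges of `F`. -/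
def edgesOf {d : ℕ} (F : Square d) : Set (Sym2 (V d)) :=
  {s(F.corner, F.corner + uv F.i), s(F.corner, F.corner + uv F.j),
   s(F.corner + uv F.i, F.corner + uv F.i + uv F.j),
   s(F.corner + uv F.j, F.corner + uv F.i + uv F.j)}

/-- A set of plaquettes has empty boundary if every `(d-2)`-facet of the dual
lattice is incident to an even number of its members. -/
def NoBoundary {d : ℕ} (P : Set (Sym2 (V d))) : Prop :=
  ∀ F : Square d, Even (edgesOf F ∩ P).ncard

/-- Two plaquettes are adjacent if their intersection is a `(d-2)`-facet,
equivalently their dual edges are distinct edges of a common unit square. -/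
def plaqAdj {d : ℕ} (e₁ e₂ : Sym2 (V d)) : Prop :=
  e₁ ≠ e₂ ∧ ∃ F : Square d, e₁ ∈ edgesOf F ∧ e₂ ∈ edgesOf F

/-- A set of plaquettes is connected for the adjacency relation `plaqAdj`. -/
def PlaqConnected {d : ℕ} (P : Set (Sym2 (V d))) : Prop :=
  ∀ a ∈ P, ∀ b ∈ P, ReflTransGen (fun u v => plaqAdj u v ∧ u ∈ P ∧ v ∈ P) a b

open MeasureTheory

/-- The standard monotone coupling: each edge carries an independent
Uniform[0,1] variable, and an edge `e` is open at level `p` iff `U_e ≤ p`. -/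
abbrev UConfig (d : ℕ) := Sym2 (V d) → ℝ

/-- `e` is an edge of the lattice `ℤ^d`. -/
def IsEdge {d : ℕ} (e : Sym2 (V d)) : Prop :=
  ∃ x y, latAdj x y ∧ e = s(x, y)

/-- `x` and `y` are joined by a `p`-open path in the coupling. -/
def openConnU {d : ℕ} (u : UConfig d) (p : ℝ) (x y : V d) : Prop :=
  ReflTransGen (fun a b => latAdj a b ∧ u s(a, b) ≤ p) x y

/-- `x` lies in an infinite `p`-open cluster. -/
def inInfClusterU {d : ℕ} (u : UConfig d) (p : ℝ) (x : V d) : Prop :=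
  {y | openConnU u p x y}.Infinite

/-- The set `X` at level `p`: vertices in no infinite `p`-open cluster. -/
def XsetU {d : ℕ} (u : UConfig d) (p : ℝ) : Set (V d) :=
  {x | ¬ inInfClusterU u p x}

/-- The event that `X` at level `p` has an infinite connected component. -/
def XhasInfU {d : ℕ} (u : UConfig d) (p : ℝ) : Prop :=
  ∃ x ∈ XsetU u p,
    {y | ReflTransGen (fun a b => latAdj a b ∧ a ∈ XsetU u p ∧ b ∈ XsetU u p) x y}.Infinite

/-- `P` is the product of i.i.d. Uniform[0,1] edge variables. -/
def IsUniformProduct {d : ℕ} (P : Measure (UConfig d)) : Prop :=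
  ∀ s : Finset (Sym2 (V d)), (∀ e ∈ s, IsEdge e) →
    ∀ a : Sym2 (V d) → ℝ, (∀ e ∈ s, a e ∈ Set.Icc (0 : ℝ) 1) →
      P {u | ∀ e ∈ s, u e ≤ a e} = ∏ e ∈ s, ENNReal.ofReal (a e)

set_option linter.unusedSectionVars false

section MeasAux
variable {Ω : Type*} [MeasurableSpace Ω] {γ : Type*} [Countable γ]

lemma measurableSet_chain (r : Ω → γ → γ → Prop)
    (h : ∀ a b, MeasurableSet {ω | r ω a b}) (a : γ) (l : List γ) :
    MeasurableSet {ω | List.Chain (r ω) a l} := by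
  induction l generalizing a with
  | nil => simp [List.Chain]
  | cons b l ih =>
      have he : {ω | List.Chain (r ω) a (b :: l)} =
          {ω | r ω a b} ∩ {ω | List.Chain (r ω) b l} := by
        ext ω; simp [List.Chain, List.isChain_cons_cons]
      rw [he]; exact (h a b).inter (ih b)

lemma measurableSet_reflTransGen (r : Ω → γ → γ → Prop)
    (h : ∀ a b, MeasurableSet {ω | r ω a b}) (a b : γ) :
    MeasurableSet {ω | ReflTransGen (r ω) a b} := by
  have he : {ω | ReflTransGen (r ω) a b} =
      ⋃ l : {l : List γ // (a :: l).getLast (by simp) = b},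
        {ω | List.Chain (r ω) a l.1} := by
    ext ω
    simp only [Set.mem_iUnion, Set.mem_setOf_eq]
    constructor
    · intro hr
      obtain ⟨l, hc, hl⟩ := List.exists_isChain_cons_of_relationReflTransGen hr
      exact ⟨⟨l, hl⟩, hc⟩
    · rintro ⟨⟨l, hl⟩, hc⟩
      exact List.relationReflTransGen_of_exists_isChain_cons l hc hl
  rw [he]
  exact MeasurableSet.iUnion fun l => measurableSet_chain r h a l.1

lemma infinite_iff_finset (S : Set γ) :
    S.Infinite ↔ ∀ F : Finset γ, ∃ y, y ∉ F ∧ y ∈ S := by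
  constructor
  · intro hS F
    obtain ⟨y, hy⟩ := (hS.diff F.finite_toSet).nonempty
    exact ⟨y, hy.2, hy.1⟩
  · intro h
    intro hfin
    obtain ⟨y, hy1, hy2⟩ := h hfin.toFinset
    exact hy1 (hfin.mem_toFinset.2 hy2)

lemma measurableSet_infinite (S : Ω → Set γ) (h : ∀ y, MeasurableSet {ω | y ∈ S ω}) :
    MeasurableSet {ω | (S ω).Infinite} := by
  have he : {ω | (S ω).Infinite} =
      ⋂ F : Finset γ, ⋃ (y : γ) (_ : y ∉ F), {ω | y ∈ S ω} := by
    ext ω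
    simp only [Set.mem_iInter, Set.mem_iUnion, Set.mem_setOf_eq]
    rw [infinite_iff_finset]
    constructor
    · intro hh F; obtain ⟨y, h1, h2⟩ := hh F; exact ⟨y, h1, h2⟩
    · intro hh F; obtain ⟨y, h1, h2⟩ := hh F; exact ⟨y, h1, h2⟩
  rw [he]
  exact MeasurableSet.iInter fun F =>
    MeasurableSet.iUnion fun y => MeasurableSet.iUnion fun _ => h y

end MeasAux

lemma measurableSet_XhasInfU {d : ℕ} {Ω : Type*} [MeasurableSpace Ω] (p : ℝ)
    (w : Ω → UConfig d)
    (h : ∀ a b : V d, latAdj a b → MeasurableSet {ω | w ω s(a, b) ≤ p}) :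
    MeasurableSet {ω | XhasInfU (w ω) p} := by
  have hrel : ∀ a b : V d, MeasurableSet {ω | latAdj a b ∧ w ω s(a, b) ≤ p} := by
    intro a b
    by_cases hab : latAdj a b
    · have : {ω | latAdj a b ∧ w ω s(a, b) ≤ p} = {ω | w ω s(a, b) ≤ p} := by
        ext ω; simp [hab]
      rw [this]; exact h a b hab
    · have : {ω | latAdj a b ∧ w ω s(a, b) ≤ p} = (∅ : Set Ω) := by
        ext ω; simp [hab]
      rw [this]; exact MeasurableSet.empty
  have hconn : ∀ x y : V d, MeasurableSet {ω | openConnU (w ω) p x y} :=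
    measurableSet_reflTransGen (fun ω a b => latAdj a b ∧ w ω s(a, b) ≤ p) hrel
  have hX : ∀ x : V d, MeasurableSet {ω | x ∈ XsetU (w ω) p} := by
    intro x
    have : {ω | x ∈ XsetU (w ω) p} = {ω | ({y | openConnU (w ω) p x y}).Infinite}ᶜ := by
      ext ω; simp [XsetU, inInfClusterU]
    rw [this]
    exact (measurableSet_infinite _ (hconn x)).compl
  have hcompRel : ∀ a b : V d,
      MeasurableSet {ω | latAdj a b ∧ a ∈ XsetU (w ω) p ∧ b ∈ XsetU (w ω) p} := by
    intro a b
    by_cases hab : latAdj a b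
    · have : {ω | latAdj a b ∧ a ∈ XsetU (w ω) p ∧ b ∈ XsetU (w ω) p} =
          {ω | a ∈ XsetU (w ω) p} ∩ {ω | b ∈ XsetU (w ω) p} := by
        ext ω; simp [hab]
      rw [this]; exact (hX a).inter (hX b)
    · have : {ω | latAdj a b ∧ a ∈ XsetU (w ω) p ∧ b ∈ XsetU (w ω) p} = (∅ : Set Ω) := by
        ext ω; simp [hab]
      rw [this]; exact MeasurableSet.empty
  have hcomp : ∀ x : V d, MeasurableSet
      {ω | ({y | ReflTransGen (fun a b => latAdj a b ∧ a ∈ XsetU (w ω) p ∧ b ∈ XsetU (w ω) p) x y}).Infinite} := by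
    intro x
    exact measurableSet_infinite _ (fun y =>
      measurableSet_reflTransGen
        (fun ω a b => latAdj a b ∧ a ∈ XsetU (w ω) p ∧ b ∈ XsetU (w ω) p) hcompRel x y)
  have he : {ω | XhasInfU (w ω) p} =
      ⋃ x : V d, ({ω | x ∈ XsetU (w ω) p} ∩
        {ω | ({y | ReflTransGen (fun a b => latAdj a b ∧ a ∈ XsetU (w ω) p ∧ b ∈ XsetU (w ω) p) x y}).Infinite}) := by
    ext ω
    simp only [Set.mem_iUnion, Set.mem_inter_iff, Set.mem_setOf_eq, XhasInfU]
  rw [he]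
  exact MeasurableSet.iUnion fun x => (hX x).inter (hcomp x)

section Comb
variable {d : ℕ}

lemma latAdj_symm {x y : V d} (h : latAdj x y) : latAdj y x := by
  obtain ⟨i, h1, h2⟩ := h
  refine ⟨i, ?_, fun j hj => (h2 j hj).symm⟩
  rw [← Int.natAbs_neg, neg_sub]; exact h1

lemma nbhd_finite (x : V d) : {y : V d | latAdj x y}.Finite := by
  apply Set.Finite.subset ((Set.finite_range
      (fun i : Fin d => Function.update x i (x i - 1))).union
    (Set.finite_range (fun i : Fin d => Function.update x i (x i + 1))))
  rintro y ⟨i, h1, h2⟩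
  rcases Int.natAbs_eq_iff.1 h1 with h | h
  · refine Or.inl ⟨i, ?_⟩
    funext j
    by_cases hj : j = i
    · subst hj; simp only [Function.update_self]; omega
    · simp only [Function.update_of_ne hj]; exact h2 j hj
  · refine Or.inr ⟨i, ?_⟩
    funext j
    by_cases hj : j = i
    · subst hj; simp only [Function.update_self]; omega
    · simp only [Function.update_of_ne hj]; exact h2 j hj

lemma openConnU_symm {u : UConfig d} {p : ℝ} : Symmetric (openConnU u p) :=
  by
    haveI : Std.Symm (fun a b : V d => latAdj a b ∧ u s(a, b) ≤ p) :=
      ⟨fun a b h => ⟨latAdj_symm h.1, by rw [Sym2.eq_swap]; exact h.2⟩⟩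
    intro a b h
    unfold openConnU at h ⊢
    exact Std.Symm.symm a b h

lemma escape (u u' : UConfig d) (p : ℝ) {x y : V d} (h : openConnU u' p x y) :
    openConnU u p x y ∨
      ∃ a b : V d, openConnU u p x a ∧ latAdj a b ∧ u' s(a, b) ≤ p ∧ ¬ u s(a, b) ≤ p := by
  induction h with
  | refl => exact Or.inl ReflTransGen.refl
  | @tail b c hxb hbc ih =>
    rcases ih with h1 | h1
    · by_cases hu : u s(b, c) ≤ p
      · exact Or.inl (h1.tail ⟨hbc.1, hu⟩)
      · exact Or.inr ⟨b, c, h1, hbc.1, hbc.2, hu⟩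
    · exact Or.inr h1

lemma touched_finite {D : Set (Sym2 (V d))} (hD : D.Finite) :
    {v : V d | ∃ e ∈ D, v ∈ e}.Finite := by
  have he : {v : V d | ∃ e ∈ D, v ∈ e} = ⋃ e ∈ D, {v | v ∈ e} := by
    ext v; simp
  rw [he]
  refine hD.biUnion (fun e _ => ?_)
  induction e using Sym2.ind with
  | _ a b =>
    have : {v : V d | v ∈ s(a, b)} = {a, b} := by
      ext v; simp [Sym2.mem_iff]
    rw [this]; exact (Set.finite_singleton b).insert a

lemma Xdiff_finite (u u' : UConfig d) (p : ℝ)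
    (hfin : {e : Sym2 (V d) | IsEdge e ∧ u e ≠ u' e}.Finite) :
    (XsetU u p \ XsetU u' p).Finite := by
  set D := {e : Sym2 (V d) | IsEdge e ∧ u e ≠ u' e} with hDdef
  have hW : {v : V d | ∃ e ∈ D, v ∈ e}.Finite := touched_finite hfin
  apply Set.Finite.subset ((hW.inter_of_left (XsetU u p)).biUnion
    (fun v hv => ?_))
  · -- the subset proof
    intro x hx
    obtain ⟨hxX, hxX'⟩ := hx
    have hinf' : {y | openConnU u' p x y}.Infinite := by
      by_contra hc
      exact hxX' hc
    have hfinx : {y | openConnU u p x y}.Finite := Set.not_infinite.1 hxX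
    have hy : ∃ y, openConnU u' p x y ∧ ¬ openConnU u p x y := by
      by_contra hc
      push_neg at hc
      exact hinf' (hfinx.subset (fun y hy => hc y hy))
    obtain ⟨y, hy1, hy2⟩ := hy
    rcases escape u u' p hy1 with h | ⟨a, b, hxa, hab, hle, hnle⟩
    · exact absurd h hy2
    · have heD : s(a, b) ∈ D := by
        refine ⟨⟨a, b, hab, rfl⟩, fun hequ => hnle (hequ ▸ hle)⟩
      have haW : a ∈ {v : V d | ∃ e ∈ D, v ∈ e} := ⟨s(a, b), heD, Sym2.mem_mk_left a b⟩
      have haX : a ∈ XsetU u p := by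
        intro hinfa
        exact hxX (hinfa.mono (fun z hz => hxa.trans hz))
      refine Set.mem_biUnion (Set.mem_inter haW haX) (openConnU_symm hxa)
  · -- each cluster finite
    exact Set.not_infinite.1 hv.2

lemma XhasInf_mono_diff (X X' : Set (V d)) (hA : (X \ X').Finite)
    (h : ∃ x ∈ X, {y | ReflTransGen (fun a b => latAdj a b ∧ a ∈ X ∧ b ∈ X) x y}.Infinite) :
    ∃ x ∈ X', {y | ReflTransGen (fun a b => latAdj a b ∧ a ∈ X' ∧ b ∈ X') x y}.Infinite := by
  obtain ⟨x, hxX, hC⟩ := h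
  set A := X \ X' with hAdef
  set C := {y | ReflTransGen (fun a b => latAdj a b ∧ a ∈ X ∧ b ∈ X) x y} with hCdef
  have hCX : C ⊆ X := by
    intro y hy
    induction hy with
    | refl => exact hxX
    | tail _ h2 => exact h2.2.2
  set F := {z : V d | z ∈ C ∧ z ∉ A ∧ ∃ a ∈ A, latAdj z a} with hFdef
  have hF : F.Finite := by
    apply Set.Finite.subset (hA.biUnion (fun a _ => nbhd_finite a))
    rintro z ⟨_, _, a, haA, hza⟩
    exact Set.mem_biUnion haA (latAdj_symm hza)
  set r' := fun a b : V d => latAdj a b ∧ (a ∈ C ∧ a ∉ A) ∧ (b ∈ C ∧ b ∉ A) with hr'def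
  have key : ∀ z : V d, ReflTransGen (fun a b => latAdj a b ∧ a ∈ X ∧ b ∈ X) x z →
      z ∉ A → ∃ w, w ∈ insert x F ∧ (w ∈ C ∧ w ∉ A) ∧ ReflTransGen r' w z := by
    intro z hz
    induction hz with
    | refl =>
      intro hxA
      exact ⟨x, Set.mem_insert x _, ⟨ReflTransGen.refl, hxA⟩, ReflTransGen.refl⟩
    | @tail b c hxb hbc ih =>
      intro hcA
      have hcC : c ∈ C := hxb.tail hbc
      have hbC : b ∈ C := hxb
      by_cases hbA : b ∈ A
      · refine ⟨c, Set.mem_insert_of_mem _ ⟨hcC, hcA, b, hbA, latAdj_symm hbc.1⟩,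
          ⟨hcC, hcA⟩, ReflTransGen.refl⟩
      · obtain ⟨w, hw1, hw2, hw3⟩ := ih hbA
        exact ⟨w, hw1, hw2, hw3.tail ⟨hbc.1, ⟨hbC, hbA⟩, ⟨hcC, hcA⟩⟩⟩
  have hCA : (C \ A).Infinite := hC.diff hA
  have hcover : C \ A ⊆ ⋃ w ∈ insert x F, {z | ReflTransGen r' w z} := by
    rintro z ⟨hzC, hzA⟩
    obtain ⟨w, hw1, _, hw3⟩ := key z hzC hzA
    exact Set.mem_biUnion hw1 hw3
  have hT : (insert x F : Set (V d)).Finite := hF.insert x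
  have hsome : ∃ w ∈ insert x F, {z | ReflTransGen r' w z}.Infinite := by
    by_contra hc
    push_neg at hc
    exact hCA (Set.Finite.subset (hT.biUnion hc) hcover)
  obtain ⟨w, _, hSw⟩ := hsome
  have hwCA : w ∈ C ∧ w ∉ A := by
    obtain ⟨z, hz, hzw'⟩ := (hSw.diff (Set.finite_singleton w)).nonempty
    have hzw : z ≠ w := by simpa using hzw'
    rcases (ReflTransGen.cases_head hz) with h | ⟨c, hc, _⟩
    · exact absurd h.symm hzw
    · exact hc.2.1
  have hwX' : w ∈ X' := by
    have := hCX hwCA.1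
    by_contra hX'
    exact hwCA.2 ⟨this, hX'⟩
  refine ⟨w, hwX', hSw.mono ?_⟩
  intro z hz
  refine ReflTransGen.mono (fun a b hab => ⟨hab.1, ?_, ?_⟩) _ _ hz
  · have haX := hCX hab.2.1.1
    by_contra hX'
    exact hab.2.1.2 ⟨haX, hX'⟩
  · have hbX := hCX hab.2.2.1
    by_contra hX'
    exact hab.2.2.2 ⟨hbX, hX'⟩

lemma XhasInfU_congr (u u' : UConfig d) (p : ℝ)
    (hfin : {e : Sym2 (V d) | IsEdge e ∧ u e ≠ u' e}.Finite) :
    XhasInfU u p ↔ XhasInfU u' p := by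
  have hfin' : {e : Sym2 (V d) | IsEdge e ∧ u' e ≠ u e}.Finite := by
    apply hfin.subset
    rintro e ⟨h1, h2⟩
    exact ⟨h1, fun h => h2 h.symm⟩
  constructor
  · exact fun h => XhasInf_mono_diff _ _ (Xdiff_finite u u' p hfin) h
  · exact fun h => XhasInf_mono_diff _ _ (Xdiff_finite u' u p hfin') h

lemma XhasInfU_anti (u : UConfig d) {p q : ℝ} (hpq : p ≤ q) (h : XhasInfU u q) :
    XhasInfU u p := by
  have hXsub : XsetU u q ⊆ XsetU u p := by
    intro x hx hinf
    exact hx (hinf.mono (fun y hy => ReflTransGen.mono (fun a b hab => ⟨hab.1, hab.2.trans hpq⟩) _ _ hy))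
  obtain ⟨x, hx, hinf⟩ := h
  exact ⟨x, hXsub hx, hinf.mono (fun y hy =>
    ReflTransGen.mono (fun a b hab => ⟨hab.1, hXsub hab.2.1, hXsub hab.2.2⟩) _ _ hy)⟩

end Comb

section ZeroOne

open MeasureTheory MeasurableSpace ProbabilityTheory

noncomputable section

/-- coarse σ-algebra on ℝ generated by `Iic a`, `a ∈ [0,1]`. -/
def mIic : MeasurableSpace ℝ :=
  MeasurableSpace.generateFrom {s | ∃ a ∈ Set.Icc (0:ℝ) 1, s = Set.Iic a}

lemma mIic_le : mIic ≤ Real.measurableSpace :=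
  MeasurableSpace.generateFrom_le (by rintro s ⟨a, -, rfl⟩; exact measurableSet_Iic)

variable {d : ℕ}

def gfun (En : ℕ ≃ {e : Sym2 (V d) // IsEdge e}) (n : ℕ) : Sym2 (V d) :=
  (En n : {e : Sym2 (V d) // IsEdge e})

lemma gfun_inj (En : ℕ ≃ {e : Sym2 (V d) // IsEdge e}) : Function.Injective (gfun En) :=
  fun a b h => En.injective (Subtype.ext h)

lemma gfun_isEdge (En : ℕ ≃ {e : Sym2 (V d) // IsEdge e}) (n : ℕ) : IsEdge (gfun En n) :=
  (En n).2

lemma gfun_surj (En : ℕ ≃ {e : Sym2 (V d) // IsEdge e}) {e : Sym2 (V d)} (he : IsEdge e) :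
    ∃ n, gfun En n = e :=
  ⟨En.symm ⟨e, he⟩, by simp [gfun]⟩

def sAlg (En : ℕ ≃ {e : Sym2 (V d) // IsEdge e}) (n : ℕ) : MeasurableSpace (UConfig d) :=
  mIic.comap (fun u => u (gfun En n))

lemma sAlg_le (En : ℕ ≃ {e : Sym2 (V d) // IsEdge e}) (n : ℕ) :
    sAlg En n ≤ (by infer_instance : MeasurableSpace (UConfig d)) :=
  le_trans (MeasurableSpace.comap_mono mIic_le)
    (measurable_iff_comap_le.1 (measurable_pi_apply (gfun En n)))

open Classical in
def extendFun (En : ℕ ≃ {e : Sym2 (V d) // IsEdge e}) (n : ℕ)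
    (v : {k : ℕ // k ≥ n} → ℝ) : UConfig d :=
  fun e => if h : ∃ k : {k : ℕ // k ≥ n}, gfun En k.1 = e then v h.choose else 0

lemma extendFun_pos (En : ℕ ≃ {e : Sym2 (V d) // IsEdge e}) (n : ℕ)
    (v : {k : ℕ // k ≥ n} → ℝ) {e : Sym2 (V d)}
    (h : ∃ k : {k : ℕ // k ≥ n}, gfun En k.1 = e) :
    extendFun En n v e = v h.choose := dif_pos h

lemma extendFun_neg (En : ℕ ≃ {e : Sym2 (V d) // IsEdge e}) (n : ℕ)
    (v : {k : ℕ // k ≥ n} → ℝ) {e : Sym2 (V d)}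
    (h : ¬ ∃ k : {k : ℕ // k ≥ n}, gfun En k.1 = e) :
    extendFun En n v e = 0 := dif_neg h

lemma XhasInf_zero_or_one (d : ℕ) (hd : 2 ≤ d) (P : Measure (UConfig d))
    [IsProbabilityMeasure P] (hP : IsUniformProduct P) {p : ℝ}
    (hp : p ∈ Set.Icc (0:ℝ) 1) :
    P {u | XhasInfU u p} = 0 ∨ P {u | XhasInfU u p} = 1 := by
  classical
  -- the edge set is countably infinite
  haveI : Infinite {e : Sym2 (V d) // IsEdge e} := by
    have h0 : (0 : ℕ) < d := by omega
    have h1 : (1 : ℕ) < d := by omega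
    set i0 : Fin d := ⟨0, h0⟩ with hi0
    set i1 : Fin d := ⟨1, h1⟩ with hi1
    have hne : i1 ≠ i0 := by simp [hi0, hi1, Fin.ext_iff]
    refine Infinite.of_injective
      (fun n : ℕ => (⟨s((fun _ => (n:ℤ) : V d), ((fun _ => (n:ℤ) : V d) + uv i0)), ?_⟩ :
        {e : Sym2 (V d) // IsEdge e})) ?_
    · refine ⟨_, _, ⟨i0, ?_, fun j hj => ?_⟩, rfl⟩
      · simp [uv, Pi.add_apply]
      · simp [uv, Pi.add_apply, hj]
    · intro n m h
      have h2 : s((fun _ => (n:ℤ) : V d), ((fun _ => (n:ℤ) : V d) + uv i0)) =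
          s((fun _ => (m:ℤ) : V d), ((fun _ => (m:ℤ) : V d) + uv i0)) := by
        exact congrArg Subtype.val h
      rcases Sym2.eq_iff.1 h2 with ⟨ha, -⟩ | ⟨ha, -⟩
      · have := congrFun ha i1
        exact_mod_cast this
      · have := congrFun ha i1
        simp only [Pi.add_apply, uv, if_neg hne, add_zero] at this
        exact_mod_cast this
  obtain ⟨En⟩ : Nonempty (ℕ ≃ {e : Sym2 (V d) // IsEdge e}) := nonempty_equiv_of_countable
  -- independence
  set π : ℕ → Set (Set (UConfig d)) :=
    fun n => {t | ∃ a ∈ Set.Icc (0:ℝ) 1, t = {u : UConfig d | u (gfun En n) ≤ a}} with hπ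
  have hpi : ∀ n, IsPiSystem (π n) := by
    rintro n t1 ⟨a, ha, rfl⟩ t2 ⟨b, hb, rfl⟩ -
    refine ⟨min a b, ⟨le_min ha.1 hb.1, (min_le_left _ _).trans ha.2⟩, ?_⟩
    ext u
    simp [le_min_iff]
  have hgen : ∀ n, sAlg En n = MeasurableSpace.generateFrom (π n) := by
    intro n
    rw [sAlg, mIic, MeasurableSpace.comap_generateFrom]
    congr 1
    ext t
    simp only [Set.mem_image, Set.mem_setOf_eq, hπ]
    constructor
    · rintro ⟨s', ⟨a, ha, rfl⟩, rfl⟩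
      exact ⟨a, ha, rfl⟩
    · rintro ⟨a, ha, rfl⟩
      exact ⟨Set.Iic a, ⟨a, ha, rfl⟩, rfl⟩
  have hind : iIndepSets π P := by
    rw [iIndepSets_iff]
    intro t f hf
    have hf' : ∀ i : ℕ, ∃ a : ℝ, i ∈ t →
        a ∈ Set.Icc (0:ℝ) 1 ∧ f i = {u : UConfig d | u (gfun En i) ≤ a} := by
      intro i
      by_cases hi : i ∈ t
      · obtain ⟨a, ha, hfa⟩ := hf i hi
        exact ⟨a, fun _ => ⟨ha, hfa⟩⟩
      · exact ⟨0, fun h => absurd h hi⟩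
    choose a ha using hf'
    have hsingle : ∀ i ∈ t, P (f i) = ENNReal.ofReal (a i) := by
      intro i hi
      have h1 := hP {gfun En i} (by simpa using gfun_isEdge En i) (fun _ => a i)
        (by simpa using (ha i hi).1)
      simp only [Finset.mem_singleton, Finset.prod_singleton] at h1
      rw [(ha i hi).2]
      rw [← h1]
      congr 1
      ext u
      simp
    have hmem : ∀ e ∈ t.image (gfun En), IsEdge e := by
      intro e he
      obtain ⟨i, -, rfl⟩ := Finset.mem_image.1 he
      exact gfun_isEdge En i
    have hicc : ∀ e ∈ t.image (gfun En),
        (fun e => a (Function.invFun (gfun En) e)) e ∈ Set.Icc (0:ℝ) 1 := by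
      intro e he
      obtain ⟨i, hi, rfl⟩ := Finset.mem_image.1 he
      show a (Function.invFun (gfun En) (gfun En i)) ∈ Set.Icc (0:ℝ) 1
      rw [Function.leftInverse_invFun (gfun_inj En) i]
      exact (ha i hi).1
    have hall := hP (t.image (gfun En)) hmem _ hicc
    have hset : {u : UConfig d | ∀ e ∈ t.image (gfun En),
        u e ≤ a (Function.invFun (gfun En) e)} = ⋂ i ∈ t, f i := by
      ext u
      simp only [Set.mem_setOf_eq, Set.mem_iInter, Finset.mem_image]
      constructor
      · intro h i hi
        rw [(ha i hi).2]
        have := h (gfun En i) ⟨i, hi, rfl⟩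
        rwa [Function.leftInverse_invFun (gfun_inj En) i] at this
      · rintro h e ⟨i, hi, rfl⟩
        rw [Function.leftInverse_invFun (gfun_inj En) i]
        have := h i hi
        rwa [(ha i hi).2] at this
    rw [hset] at hall
    rw [hall, Finset.prod_image (fun i _ j _ h => gfun_inj En h)]
    refine Finset.prod_congr rfl (fun i hi => ?_)
    rw [Function.leftInverse_invFun (gfun_inj En) i, hsingle i hi]
  have hiIndep : iIndep (sAlg En) P :=
    iIndepSets.iIndep (sAlg_le En) π hpi hgen hind
  -- tail measurability
  have ht_tail : MeasurableSet[Filter.limsup (sAlg En) Filter.atTop]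
      {u : UConfig d | XhasInfU u p} := by
    rw [Filter.limsup_eq_iInf_iSup_of_nat, MeasurableSpace.measurableSet_iInf]
    intro n
    rw [iSup_subtype']
    set M : MeasurableSpace ({k : ℕ // k ≥ n} → ℝ) :=
      ⨆ k : {k : ℕ // k ≥ n}, mIic.comap (fun v : {k : ℕ // k ≥ n} → ℝ => v k) with hM
    have hsup : (⨆ k : {k : ℕ // k ≥ n}, sAlg En k.1) =
        MeasurableSpace.comap
          (fun (u : UConfig d) (k : {k : ℕ // k ≥ n}) => u (gfun En k.1)) M := by
      rw [hM, MeasurableSpace.comap_iSup]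
      refine iSup_congr (fun k => ?_)
      rw [MeasurableSpace.comap_comp]
      rfl
    rw [hsup, MeasurableSpace.measurableSet_comap]
    refine ⟨{v : {k : ℕ // k ≥ n} → ℝ | XhasInfU (extendFun En n v) p}, ?_, ?_⟩
    · -- measurable w.r.t. M
      refine @measurableSet_XhasInfU d _ M p (extendFun En n) ?_
      intro x y hxy
      by_cases h : ∃ k : {k : ℕ // k ≥ n}, gfun En k.1 = s(x, y)
      · have hset : {v : {k : ℕ // k ≥ n} → ℝ | extendFun En n v s(x, y) ≤ p} =
            (fun v : {k : ℕ // k ≥ n} → ℝ => v h.choose) ⁻¹' (Set.Iic p) := by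
          ext v
          rw [Set.mem_setOf_eq, extendFun_pos En n v h]
          simp
        rw [hset]
        have h1 : MeasurableSet[mIic.comap (fun v : {k : ℕ // k ≥ n} → ℝ => v h.choose)]
            ((fun v : {k : ℕ // k ≥ n} → ℝ => v h.choose) ⁻¹' (Set.Iic p)) :=
          ⟨Set.Iic p, measurableSet_generateFrom ⟨p, hp, rfl⟩, rfl⟩
        have h2 : mIic.comap (fun v : {k : ℕ // k ≥ n} → ℝ => v h.choose) ≤ M :=
          le_iSup (fun k : {k : ℕ // k ≥ n} =>
            mIic.comap (fun v : {k : ℕ // k ≥ n} → ℝ => v k)) h.choose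
        exact h2 _ h1
      · have hset : {v : {k : ℕ // k ≥ n} → ℝ | extendFun En n v s(x, y) ≤ p} =
            Set.univ := by
          ext v
          rw [Set.mem_setOf_eq, extendFun_neg En n v h]
          simp [hp.1]
        rw [hset]
        exact MeasurableSet.univ
    · -- the preimage is the event
      ext u
      simp only [Set.mem_preimage, Set.mem_setOf_eq]
      refine XhasInfU_congr _ _ p ?_
      apply Set.Finite.subset ((Finset.range n).image (gfun En)).finite_toSet
      rintro e ⟨he, hne⟩
      by_cases h : ∃ k : {k : ℕ // k ≥ n}, gfun En k.1 = e
      · exfalso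
        apply hne
        rw [extendFun_pos En n _ h, h.choose_spec]
      · obtain ⟨m0, hm0⟩ := gfun_surj En he
        have hm0n : m0 < n := by
          by_contra hge
          exact h ⟨⟨m0, le_of_not_gt hge⟩, hm0⟩
        simp only [Finset.coe_image, Set.mem_image, Finset.mem_coe, Finset.mem_range]
        exact ⟨m0, hm0n, hm0⟩
  exact measure_zero_or_one_of_measurableSet_limsup_atTop (sAlg_le En) hiIndep ht_tail

end
end ZeroOne

/-- The event that the union `X` of finite open clusters has an infinite
component is trivial (probability `0` or `1`), its probability is
non-increasing in `p`, and hence there is a critical value `p_fin ∈ [0,1]`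
with probability `1` below it and `0` above it. -/
theorem XhasInf_zero_one_law (d : ℕ) (hd : 2 ≤ d)
    (P : Measure (UConfig d)) [IsProbabilityMeasure P]
    (hP : IsUniformProduct P) :
    (∀ p ∈ Set.Icc (0 : ℝ) 1,
        P {u | XhasInfU u p} = 0 ∨ P {u | XhasInfU u p} = 1) ∧
    (∀ p q : ℝ, p ≤ q → P {u | XhasInfU u q} ≤ P {u | XhasInfU u p}) ∧
    ∃ pf ∈ Set.Icc (0 : ℝ) 1, ∀ p ∈ Set.Icc (0 : ℝ) 1,
      (p < pf → P {u | XhasInfU u p} = 1) ∧ (pf < p → P {u | XhasInfU u p} = 0) := by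
  have hmono : ∀ p q : ℝ, p ≤ q → P {u | XhasInfU u q} ≤ P {u | XhasInfU u p} := by
    intro p q hpq
    exact measure_mono (fun u hu => XhasInfU_anti u hpq hu)
  have h01 : ∀ p ∈ Set.Icc (0:ℝ) 1, P {u | XhasInfU u p} = 0 ∨ P {u | XhasInfU u p} = 1 :=
    fun p hp => XhasInf_zero_or_one d hd P hP hp
  refine ⟨h01, hmono, ?_⟩
  set A : Set ℝ := insert 0 {p | p ∈ Set.Icc (0:ℝ) 1 ∧ P {u | XhasInfU u p} = 1} with hA
  have hne : A.Nonempty := ⟨0, Set.mem_insert _ _⟩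
  have hub : (1 : ℝ) ∈ upperBounds A := by
    rintro x (rfl | ⟨hx, -⟩)
    · norm_num
    · exact hx.2
  have hbdd : BddAbove A := ⟨1, hub⟩
  have hpf0 : 0 ≤ sSup A := le_csSup hbdd (Set.mem_insert _ _)
  have hpf1 : sSup A ≤ 1 := csSup_le hne hub
  refine ⟨sSup A, ⟨hpf0, hpf1⟩, fun p hp => ⟨?_, ?_⟩⟩
  · intro hlt
    obtain ⟨q, hqA, hpq⟩ := exists_lt_of_lt_csSup hne hlt
    have hq1 : P {u | XhasInfU u q} = 1 := by
      rcases hqA with rfl | ⟨-, h⟩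
      · exact absurd hpq (not_lt.2 hp.1)
      · exact h
    exact le_antisymm prob_le_one (hq1 ▸ hmono p q hpq.le)
  · intro hlt
    rcases h01 p hp with h0 | h1
    · exact h0
    · exact absurd (le_csSup hbdd (Set.mem_insert_of_mem _ ⟨hp, h1⟩)) (not_le.2 hlt)
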